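/- arXiv:1311.0811 — 2 statements merged into one kernel-verified Lean document; each statement's English description precedes it below -/
import Mathlib

section
/- Let X be a T×n real matrix, β* ∈ ℝ^n, ε ∈ ℝ^T and y = Xβ* + ε, and let λ > 0 be such that ‖X'ε/T‖_{ℓ∞} ≤ λ/2. Then any minimizer β̂ of the LASSO objective L(β) = (1/T)‖y − Xβ‖² + 2λ‖β‖_{ℓ1} satisfies: (1) (1/T)‖Xβ̂ − Xβ*‖² + λ‖β̂ − β*‖_{ℓ1} ≤ 2λ(‖β̂ − β*‖_{ℓ1} + ‖β*‖_{ℓ1} − ‖β̂‖_{ℓ1}); (2) (1/T)‖Xβ̂ − Xβ*‖² + λ‖β̂ − β*‖_{ℓ1} ≤ 4λ·min(‖β̂_J − β*_J‖_{ℓ1}, ‖β*_J‖_{ℓ1}); (3) ‖β̂_{J^c} − β*_{J^c}‖_{ℓ1} ≤ 3‖β̂_J − β*_J‖_{ℓ1}, where J = {j : β*_j ≠ 0}. -/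
namespace LassoDet

/-- ℓ1 norm of a vector -/
def l1 {ι : Type*} [Fintype ι] (v : ι → ℝ) : ℝ := ∑ q, |v q|

/-- ℓ1 norm of the subvector indexed by `R` -/
def l1F {ι : Type*} (R : Finset ι) (v : ι → ℝ) : ℝ := ∑ q ∈ R, |v q|

/-- the LASSO objective `(1/T)‖y − Xβ‖² + 2λ‖β‖₁` -/
noncomputable def lassoObj {T n : ℕ} (X : Matrix (Fin T) (Fin n) ℝ) (y : Fin T → ℝ)
    (lam : ℝ) (β : Fin n → ℝ) : ℝ :=
  (1 / (T : ℝ)) * ∑ t, (y t - ∑ j, X t j * β j) ^ 2 + 2 * lam * l1 β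

end LassoDet

/-- **Deterministic core of Theorem 1.** If `‖X'ε/T‖_∞ ≤ λ/2` then any LASSO minimizer
satisfies the three basic inequalities. -/
theorem lasso_deterministic_inequalities {T n : ℕ}
    (X : Matrix (Fin T) (Fin n) ℝ) (βstar : Fin n → ℝ) (ε : Fin T → ℝ)
    (y : Fin T → ℝ) (hy : ∀ t, y t = ∑ j, X t j * βstar j + ε t)
    (lam : ℝ) (hlam : 0 < lam)
    (hnoise : ∀ j : Fin n, |(1 / (T : ℝ)) * ∑ t, X t j * ε t| ≤ lam / 2)
    (βhat : Fin n → ℝ)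
    (hmin : ∀ β : Fin n → ℝ,
      LassoDet.lassoObj X y lam βhat ≤ LassoDet.lassoObj X y lam β)
    (J : Finset (Fin n)) (hJ : ∀ j, j ∈ J ↔ βstar j ≠ 0) :
    ((1 / (T : ℝ)) * ∑ t, (∑ j, X t j * (βhat j - βstar j)) ^ 2
        + lam * LassoDet.l1 (fun j => βhat j - βstar j)
      ≤ 2 * lam * (LassoDet.l1 (fun j => βhat j - βstar j)
          + LassoDet.l1 βstar - LassoDet.l1 βhat)) ∧
    ((1 / (T : ℝ)) * ∑ t, (∑ j, X t j * (βhat j - βstar j)) ^ 2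
        + lam * LassoDet.l1 (fun j => βhat j - βstar j)
      ≤ 4 * lam * min (LassoDet.l1F J (fun j => βhat j - βstar j))
          (LassoDet.l1F J βstar)) ∧
    (LassoDet.l1F Jᶜ (fun j => βhat j - βstar j)
      ≤ 3 * LassoDet.l1F J (fun j => βhat j - βstar j)) := by
  classical
  set δ : Fin n → ℝ := fun j => βhat j - βstar j with hδ
  have hQ0 : (0:ℝ) ≤ (1 / (T : ℝ)) * ∑ t, (∑ j, X t j * δ j) ^ 2 := by positivity
  -- basic inequality
  have key : (1/(T:ℝ)) * ∑ t, (∑ j, X t j * δ j)^2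
      ≤ lam * LassoDet.l1 δ + 2*lam*(LassoDet.l1 βstar - LassoDet.l1 βhat) := by
    have h := hmin βstar
    unfold LassoDet.lassoObj at h
    have e1 : ∀ t, (y t - ∑ j, X t j * βhat j)^2
        = (ε t)^2 - 2 * (ε t * ∑ j, X t j * δ j) + (∑ j, X t j * δ j)^2 := by
      intro t
      have : ∑ j, X t j * βhat j = ∑ j, X t j * βstar j + ∑ j, X t j * δ j := by
        rw [← Finset.sum_add_distrib]; apply Finset.sum_congr rfl; intro j _
        simp [hδ]; ring
      rw [hy, this]; ring
    have e2 : ∀ t, (y t - ∑ j, X t j * βstar j)^2 = (ε t)^2 := by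
      intro t; rw [hy]; ring
    simp_rw [e1, e2] at h
    rw [Finset.sum_add_distrib, Finset.sum_sub_distrib] at h
    have swap : ∑ t, ε t * ∑ j, X t j * δ j
        = ∑ j, δ j * ∑ t, X t j * ε t := by
      simp_rw [Finset.mul_sum]
      rw [Finset.sum_comm]
      apply Finset.sum_congr rfl; intro j _
      apply Finset.sum_congr rfl; intro t _; ring
    have hC : (1/(T:ℝ)) * ∑ t, 2 * (ε t * ∑ j, X t j * δ j)
        ≤ lam * LassoDet.l1 δ := by
      have h2 : ∑ t, 2 * (ε t * ∑ j, X t j * δ j)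
          = 2 * ∑ j, δ j * ∑ t, X t j * ε t := by
        rw [← swap, Finset.mul_sum]
      rw [h2]
      have : (1/(T:ℝ)) * (2 * ∑ j, δ j * ∑ t, X t j * ε t)
          = 2 * ∑ j, δ j * ((1/(T:ℝ)) * ∑ t, X t j * ε t) := by
        rw [Finset.mul_sum, Finset.mul_sum, Finset.mul_sum]
        apply Finset.sum_congr rfl; intro j _; ring
      rw [this]
      have hsum : ∑ j, δ j * ((1/(T:ℝ)) * ∑ t, X t j * ε t)
          ≤ ∑ j, |δ j| * (lam/2) := by
        apply Finset.sum_le_sum; intro j _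
        calc δ j * ((1/(T:ℝ)) * ∑ t, X t j * ε t)
            ≤ |δ j * ((1/(T:ℝ)) * ∑ t, X t j * ε t)| := le_abs_self _
          _ = |δ j| * |(1/(T:ℝ)) * ∑ t, X t j * ε t| := abs_mul _ _
          _ ≤ |δ j| * (lam/2) := by
              exact mul_le_mul_of_nonneg_left (hnoise j) (abs_nonneg _)
      have : ∑ j, |δ j| * (lam/2) = (lam/2) * LassoDet.l1 δ := by
        rw [LassoDet.l1, Finset.mul_sum]; apply Finset.sum_congr rfl; intro j _; ring
      linarith
    have hdist : (1/(T:ℝ)) * (∑ t, (ε t)^2 - ∑ t, 2*(ε t * ∑ j, X t j * δ j)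
          + ∑ t, (∑ j, X t j * δ j)^2)
        = (1/(T:ℝ)) * ∑ t, (ε t)^2 - (1/(T:ℝ)) * ∑ t, 2*(ε t * ∑ j, X t j * δ j)
          + (1/(T:ℝ)) * ∑ t, (∑ j, X t j * δ j)^2 := by ring
    rw [hdist] at h
    linarith
  -- set notation
  set A := LassoDet.l1F J δ with hA
  set B := LassoDet.l1F Jᶜ δ with hB
  -- splitting facts
  have hsplit : LassoDet.l1 δ = A + B := by
    rw [LassoDet.l1, hA, hB, LassoDet.l1F, LassoDet.l1F, Finset.sum_add_sum_compl]
  have hbs : LassoDet.l1 βstar = LassoDet.l1F J βstar := by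
    rw [LassoDet.l1, LassoDet.l1F]
    symm
    apply Finset.sum_subset (Finset.subset_univ _)
    intro j _ hj
    have : βstar j = 0 := by by_contra hc; exact hj ((hJ j).mpr hc)
    simp [this]
  have hbh : LassoDet.l1 βhat = LassoDet.l1F J βhat + B := by
    rw [LassoDet.l1, hB, LassoDet.l1F, LassoDet.l1F, ← Finset.sum_add_sum_compl J]
    congr 1
    apply Finset.sum_congr rfl
    intro j hj
    have : βstar j = 0 := by
      by_contra hc
      exact (Finset.mem_compl.mp hj) ((hJ j).mpr hc)
    simp [hδ, this]
  have htri1 : LassoDet.l1F J βstar ≤ LassoDet.l1F J βhat + A := by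
    rw [hA, LassoDet.l1F, LassoDet.l1F, LassoDet.l1F, ← Finset.sum_add_distrib]
    apply Finset.sum_le_sum; intro j _
    have := abs_sub_abs_le_abs_sub (βstar j) (βhat j)
    have h2 : |βstar j - βhat j| = |βhat j - βstar j| := abs_sub_comm _ _
    simp only [hδ]
    linarith
  have htri2 : A ≤ LassoDet.l1F J βhat + LassoDet.l1F J βstar := by
    rw [hA, LassoDet.l1F, LassoDet.l1F, LassoDet.l1F, ← Finset.sum_add_distrib]
    apply Finset.sum_le_sum; intro j _
    simp only [hδ]
    exact abs_sub (βhat j) (βstar j)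
  -- D := l1 δ + l1 βstar - l1 βhat = A + l1F J βstar - l1F J βhat
  have hD : LassoDet.l1 δ + LassoDet.l1 βstar - LassoDet.l1 βhat
      = A + LassoDet.l1F J βstar - LassoDet.l1F J βhat := by
    rw [hsplit, hbs, hbh]; ring
  have part1 : (1 / (T : ℝ)) * ∑ t, (∑ j, X t j * δ j) ^ 2 + lam * LassoDet.l1 δ
      ≤ 2 * lam * (LassoDet.l1 δ + LassoDet.l1 βstar - LassoDet.l1 βhat) := by
    linarith
  have part2 : (1 / (T : ℝ)) * ∑ t, (∑ j, X t j * δ j) ^ 2 + lam * LassoDet.l1 δ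
      ≤ 4 * lam * min A (LassoDet.l1F J βstar) := by
    rcases le_total A (LassoDet.l1F J βstar) with hm | hm
    · rw [min_eq_left hm]
      have hDle : LassoDet.l1 δ + LassoDet.l1 βstar - LassoDet.l1 βhat ≤ 2 * A := by
        rw [hD]; linarith
      nlinarith
    · rw [min_eq_right hm]
      have hDle : LassoDet.l1 δ + LassoDet.l1 βstar - LassoDet.l1 βhat
          ≤ 2 * LassoDet.l1F J βstar := by
        rw [hD]; linarith
      nlinarith
  have part3 : B ≤ 3 * A := by
    have hmin' : min A (LassoDet.l1F J βstar) ≤ A := min_le_left _ _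
    have h4 : lam * LassoDet.l1 δ ≤ 4 * lam * A := by nlinarith
    rw [hsplit] at h4
    nlinarith
  exact ⟨part1, part2, part3⟩
end

section
/- Let A and B be two positive semi-definite n×n real matrices, let 1 ≤ s ≤ n, and let δ = max_{1≤i,j≤n} |A_{i,j} − B_{i,j}|. If A satisfies the restricted eigenvalue condition RE(s) with constant κ_A, then κ_B² ≥ κ_A² − 16 s δ, where κ²_M = min over subsets R ⊆ {1,…,n} with |R| ≤ s and over vectors v ∈ ℝ^n, v ≠ 0, satisfying ‖v_{R^c}‖_{ℓ1} ≤ 3‖v_R‖_{ℓ1}, of v'Mv/‖v_R‖². -/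
namespace REPerturb

/-- ℓ1 norm of the subvector indexed by `R` -/
def l1F {ι : Type*} (R : Finset ι) (v : ι → ℝ) : ℝ := ∑ q ∈ R, |v q|

/-- the restricted eigenvalue `κ²_A(s)`: the infimum of `v'Av/‖v_R‖²` over sets `R` of
cardinality at most `s` and nonzero `v` with `‖v_{R^c}‖₁ ≤ 3‖v_R‖₁` -/
noncomputable def kappaSq {ι : Type*} [Fintype ι] [DecidableEq ι]
    (A : Matrix ι ι ℝ) (s : ℕ) : ℝ :=
  sInf { r : ℝ | ∃ (R : Finset ι) (v : ι → ℝ), R.card ≤ s ∧ v ≠ 0 ∧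
    l1F Rᶜ v ≤ 3 * l1F R v ∧ r = (∑ i, ∑ j, v i * A i j * v j) / (∑ q ∈ R, (v q) ^ 2) }

end REPerturb

/-- **Lemma (restricted eigenvalue perturbation).** If `A` and `B` are positive semi-definite
`n×n` matrices, `A` satisfies RE(s) (i.e. `κ_A² > 0`), and
`δ = max_{i,j} |A_{ij} − B_{ij}|`, then `κ_B² ≥ κ_A² − 16 s δ`. -/
theorem restricted_eigenvalue_perturbation {n : ℕ}
    (A B : Matrix (Fin n) (Fin n) ℝ)
    (hA : A.PosSemidef) (hB : B.PosSemidef)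
    (s : ℕ) (hs1 : 1 ≤ s) (hsn : s ≤ n)
    (hRE : 0 < REPerturb.kappaSq A s) :
    REPerturb.kappaSq B s
      ≥ REPerturb.kappaSq A s - 16 * (s : ℝ) * (⨆ i : Fin n, ⨆ j : Fin n, |A i j - B i j|) := by
  classical
  have hn : 1 ≤ n := hs1.trans hsn
  set δ : ℝ := ⨆ i : Fin n, ⨆ j : Fin n, |A i j - B i j| with hδ
  have hδij : ∀ i j : Fin n, |A i j - B i j| ≤ δ := by
    intro i j
    have h1 : |A i j - B i j| ≤ ⨆ j : Fin n, |A i j - B i j| :=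
      le_ciSup (f := fun j => |A i j - B i j|) (Set.Finite.bddAbove (Set.finite_range _)) j
    exact h1.trans (le_ciSup (f := fun i => ⨆ j : Fin n, |A i j - B i j|)
      (Set.Finite.bddAbove (Set.finite_range _)) i)
  have hδ0 : 0 ≤ δ := (abs_nonneg _).trans (hδij ⟨0, hn⟩ ⟨0, hn⟩)
  -- the set for A is bounded below by 0
  have hbddA : ∀ r ∈ { r : ℝ | ∃ (R : Finset (Fin n)) (v : Fin n → ℝ), R.card ≤ s ∧ v ≠ 0 ∧
      REPerturb.l1F Rᶜ v ≤ 3 * REPerturb.l1F R v ∧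
      r = (∑ i, ∑ j, v i * A i j * v j) / (∑ q ∈ R, (v q) ^ 2) }, 0 ≤ r := by
    rintro r ⟨R, v, -, -, -, rfl⟩
    apply div_nonneg _ (Finset.sum_nonneg fun q _ => sq_nonneg _)
    have hpsd := hA.dotProduct_mulVec_nonneg v
    simp only [dotProduct, Matrix.mulVec, star_trivial, Finset.mul_sum,
      ← mul_assoc] at hpsd
    exact hpsd
  -- main bound for every element of the B-set
  have hmain : ∀ r ∈ { r : ℝ | ∃ (R : Finset (Fin n)) (v : Fin n → ℝ), R.card ≤ s ∧ v ≠ 0 ∧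
      REPerturb.l1F Rᶜ v ≤ 3 * REPerturb.l1F R v ∧
      r = (∑ i, ∑ j, v i * B i j * v j) / (∑ q ∈ R, (v q) ^ 2) },
      REPerturb.kappaSq A s - 16 * (s : ℝ) * δ ≤ r := by
    rintro r ⟨R, v, hcard, hv0, hcone, rfl⟩
    set d : ℝ := ∑ q ∈ R, (v q) ^ 2 with hd
    have hd0 : 0 < d := by
      rcases (Finset.sum_nonneg fun q (_ : q ∈ R) => sq_nonneg (v q)).lt_or_eq with h | h
      · exact h
      · exfalso
        have hzero : ∀ q ∈ R, (v q) ^ 2 = 0 :=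
          (Finset.sum_eq_zero_iff_of_nonneg fun q _ => sq_nonneg (v q)).mp h.symm
        have hLR : REPerturb.l1F R v = 0 := by
          apply Finset.sum_eq_zero
          intro q hq
          have := hzero q hq
          simp [pow_eq_zero_iff] at this
          simp [this]
        have hLRc : REPerturb.l1F Rᶜ v = 0 := by
          have h1 : REPerturb.l1F Rᶜ v ≤ 0 := by rw [hLR] at hcone; linarith
          have h2 : 0 ≤ REPerturb.l1F Rᶜ v :=
            Finset.sum_nonneg fun q _ => abs_nonneg _
          linarith
        apply hv0
        funext q
        by_cases hq : q ∈ R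
        · have := hzero q hq; simpa [pow_eq_zero_iff] using this
        · have := (Finset.sum_eq_zero_iff_of_nonneg fun q _ => abs_nonneg (v q)).mp hLRc q
            (Finset.mem_compl.mpr hq)
          simpa using this
    -- κ_A ≤ v'Av / d
    have hκ : REPerturb.kappaSq A s ≤ (∑ i, ∑ j, v i * A i j * v j) / d :=
      csInf_le ⟨0, fun r hr => hbddA r hr⟩ ⟨R, v, hcard, hv0, hcone, rfl⟩
    -- the perturbation bound
    set L : ℝ := REPerturb.l1F R v with hL
    have hL0 : 0 ≤ L := Finset.sum_nonneg fun q _ => abs_nonneg _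
    have hT : (∑ i, |v i|) ≤ 4 * L := by
      have hsplit : (∑ i ∈ R, |v i|) + (∑ i ∈ Rᶜ, |v i|) = ∑ i, |v i| :=
        Finset.sum_add_sum_compl R _
      have := hcone
      simp only [REPerturb.l1F] at this hL ⊢
      linarith
    have hCS : L ^ 2 ≤ (s : ℝ) * d := by
      have h1 := Finset.sum_mul_sq_le_sq_mul_sq R (fun _ => (1:ℝ)) (fun q => |v q|)
      simp only [one_mul, one_pow, Finset.sum_const, nsmul_eq_mul, mul_one, sq_abs] at h1
      have h2 : (R.card : ℝ) ≤ (s : ℝ) := by exact_mod_cast hcard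
      calc L ^ 2 ≤ (R.card : ℝ) * d := h1
        _ ≤ (s : ℝ) * d := by nlinarith [hd0.le]
    have hpert : |(∑ i, ∑ j, v i * A i j * v j) - (∑ i, ∑ j, v i * B i j * v j)|
        ≤ 16 * (s : ℝ) * δ * d := by
      have h1 : (∑ i, ∑ j, v i * A i j * v j) - (∑ i, ∑ j, v i * B i j * v j)
          = ∑ i, ∑ j, v i * (A i j - B i j) * v j := by
        rw [← Finset.sum_sub_distrib]
        congr 1; funext i
        rw [← Finset.sum_sub_distrib]
        congr 1; funext j
        ring
      rw [h1]
      have h2 : |∑ i, ∑ j, v i * (A i j - B i j) * v j|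
          ≤ ∑ i, ∑ j, |v i| * δ * |v j| := by
        refine (Finset.abs_sum_le_sum_abs _ _).trans (Finset.sum_le_sum fun i _ => ?_)
        refine (Finset.abs_sum_le_sum_abs _ _).trans (Finset.sum_le_sum fun j _ => ?_)
        rw [abs_mul, abs_mul]
        exact mul_le_mul_of_nonneg_right
          (mul_le_mul_of_nonneg_left (hδij i j) (abs_nonneg (v i))) (abs_nonneg (v j))
      have h3 : (∑ i, ∑ j, |v i| * δ * |v j|) = δ * (∑ i, |v i|) * (∑ j, |v j|) := by
        calc ∑ i, ∑ j, |v i| * δ * |v j| = ∑ i, (|v i| * δ) * ∑ j, |v j| := by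
              refine Finset.sum_congr rfl fun i _ => ?_; rw [Finset.mul_sum]
          _ = ((∑ i, |v i|) * δ) * ∑ j, |v j| := by rw [← Finset.sum_mul, ← Finset.sum_mul]
          _ = δ * (∑ i, |v i|) * (∑ j, |v j|) := by ring
      have h4 : δ * (∑ i, |v i|) * (∑ j, |v j|) ≤ δ * (4 * L) * (4 * L) := by
        have hT0 : 0 ≤ ∑ i, |v i| := Finset.sum_nonneg fun q _ => abs_nonneg _
        have hTT : (∑ i, |v i|) * (∑ j, |v j|) ≤ (4 * L) * (4 * L) :=
          mul_le_mul hT hT hT0 (by positivity)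
        nlinarith [mul_le_mul_of_nonneg_left hTT hδ0]
      have h5 : δ * (4 * L) * (4 * L) = 16 * δ * L ^ 2 := by ring
      calc |∑ i, ∑ j, v i * (A i j - B i j) * v j| ≤ δ * (∑ i, |v i|) * (∑ j, |v j|) :=
            h2.trans_eq h3
        _ ≤ 16 * δ * L ^ 2 := h4.trans_eq h5
        _ ≤ 16 * (s : ℝ) * δ * d := by nlinarith
    -- conclude
    rw [le_div_iff₀ hd0]
    have hκd : REPerturb.kappaSq A s * d ≤ ∑ i, ∑ j, v i * A i j * v j :=
      (le_div_iff₀ hd0).mp hκ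
    have habs := abs_le.mp hpert
    nlinarith [habs.1, habs.2]
  -- nonemptiness of the B-set
  have hne : { r : ℝ | ∃ (R : Finset (Fin n)) (v : Fin n → ℝ), R.card ≤ s ∧ v ≠ 0 ∧
      REPerturb.l1F Rᶜ v ≤ 3 * REPerturb.l1F R v ∧
      r = (∑ i, ∑ j, v i * B i j * v j) / (∑ q ∈ R, (v q) ^ 2) }.Nonempty := by
    set i0 : Fin n := ⟨0, hn⟩
    refine ⟨_, {i0}, (fun j => if j = i0 then (1:ℝ) else 0), ?_, ?_, ?_, rfl⟩
    · simpa using hs1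
    · intro h
      have := congrFun h i0
      simp at this
    · have h1 : REPerturb.l1F ({i0}ᶜ : Finset (Fin n)) (fun j => if j = i0 then (1:ℝ) else 0) = 0 := by
        apply Finset.sum_eq_zero
        intro q hq
        have : q ≠ i0 := by simpa using hq
        simp [this]
      have h2 : REPerturb.l1F ({i0} : Finset (Fin n)) (fun j => if j = i0 then (1:ℝ) else 0) = 1 := by
        simp [REPerturb.l1F]
      rw [h1, h2]; norm_num
  exact le_csInf hne hmain
end
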